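/- Let k ≥ 2 be an integer and let 0 ≤ s < t ≤ 1. Let P₁ = (ξ₁, ξ₁+s), P₂ = (ξ₂, ξ₂+s) with 0 ≤ ξ₁ ≤ ξ₂ ≤ 1-s, and P₃ = (ξ₃, ξ₃+t), P₄ = (ξ₄, ξ₄+t) with 0 ≤ ξ₃ ≤ ξ₄ ≤ 1-t. Set u = ξ₂-ξ₁ and v = ξ₄-ξ₃, and let Q be the convex hull of {P₁, P₂, P₃, P₄}. Then (1/(k-2)!) ∬_Q (y-x)^{k-2} dx dy = (1/(k-2)!) · (1/(t-s)) · ( (1/k)(v-u)(t^k - s^k) + ((tu - sv)/(k-1))(t^{k-1} - s^{k-1}) ). -/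

import Mathlib

open MeasureTheory Set

private theorem hull_eq_trap (s t a b c d : ℝ) (hst : s < t) (hab : a ≤ b) (hcd : c ≤ d) :
    convexHull ℝ ({(s, a), (s, b), (t, c), (t, d)} : Set (ℝ × ℝ)) =
      {p : ℝ × ℝ | s ≤ p.1 ∧ p.1 ≤ t ∧
        (t - p.1) * a + (p.1 - s) * c ≤ (t - s) * p.2 ∧
        (t - s) * p.2 ≤ (t - p.1) * b + (p.1 - s) * d} := by
  have hts : (0:ℝ) < t - s := by linarith
  apply Subset.antisymm
  · apply convexHull_min
    · rintro p (rfl | rfl | rfl | rfl) <;>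
        refine ⟨?_, ?_, ?_, ?_⟩ <;>
          first
            | (simp; done)
            | (simp; linarith)
            | (simp; nlinarith)
    · rintro ⟨p1, p2⟩ ⟨hp1, hp2, hp3, hp4⟩ ⟨q1, q2⟩ ⟨hq1, hq2, hq3, hq4⟩ α β hα hβ hαβ
      have hβ' : β = 1 - α := by linarith
      subst hβ'
      simp only [mem_setOf_eq, Prod.smul_mk, smul_eq_mul, Prod.mk_add_mk, Prod.fst, Prod.snd] at *
      refine ⟨by nlinarith, by nlinarith, by nlinarith, by nlinarith⟩
  · rintro ⟨w, x⟩ ⟨hw1, hw2, hx1, hx2⟩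
    simp only [Prod.fst, Prod.snd] at hw1 hw2 hx1 hx2
    obtain ⟨lam, hlam⟩ : ∃ l : ℝ, l = (w - s) / (t - s) := ⟨_, rfl⟩
    obtain ⟨L, hL⟩ : ∃ L : ℝ, L = ((t - w) * a + (w - s) * c) / (t - s) := ⟨_, rfl⟩
    obtain ⟨R, hR⟩ : ∃ R : ℝ, R = ((t - w) * b + (w - s) * d) / (t - s) := ⟨_, rfl⟩
    have hlam0 : 0 ≤ lam := by rw [hlam]; exact div_nonneg (by linarith) hts.le
    have hlam1 : lam ≤ 1 := by rw [hlam, div_le_one hts]; linarith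
    have hLx : L ≤ x := by rw [hL, div_le_iff₀ hts]; linarith
    have hxR : x ≤ R := by rw [hR, le_div_iff₀ hts]; linarith
    have hmem : ∀ p ∈ ({(s, a), (s, b), (t, c), (t, d)} : Set (ℝ × ℝ)),
        p ∈ convexHull ℝ ({(s, a), (s, b), (t, c), (t, d)} : Set (ℝ × ℝ)) :=
      fun p hp => subset_convexHull ℝ _ hp
    have hconv := convex_convexHull ℝ ({(s, a), (s, b), (t, c), (t, d)} : Set (ℝ × ℝ))
    have hA : ((w, L) : ℝ × ℝ) ∈ convexHull ℝ ({(s, a), (s, b), (t, c), (t, d)} : Set (ℝ × ℝ)) := by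
      have heq : ((w, L) : ℝ × ℝ) = (1 - lam) • ((s, a) : ℝ × ℝ) + lam • ((t, c) : ℝ × ℝ) := by
        apply Prod.ext <;> simp [hlam, hL] <;> field_simp <;> ring
      rw [heq]
      exact hconv (hmem _ (by norm_num)) (hmem _ (by norm_num)) (by linarith) hlam0 (by ring)
    have hB : ((w, R) : ℝ × ℝ) ∈ convexHull ℝ ({(s, a), (s, b), (t, c), (t, d)} : Set (ℝ × ℝ)) := by
      have heq : ((w, R) : ℝ × ℝ) = (1 - lam) • ((s, b) : ℝ × ℝ) + lam • ((t, d) : ℝ × ℝ) := by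
        apply Prod.ext <;> simp [hlam, hR] <;> field_simp <;> ring
      rw [heq]
      exact hconv (hmem _ (by norm_num)) (hmem _ (by norm_num)) (by linarith) hlam0 (by ring)
    rcases eq_or_lt_of_le (hLx.trans hxR) with hE | hE
    · have hxL : x = L := le_antisymm (hE ▸ hxR) hLx
      exact hxL ▸ hA
    · obtain ⟨μ, hμ⟩ : ∃ m : ℝ, m = (R - x) / (R - L) := ⟨_, rfl⟩
      have hRL : (0:ℝ) < R - L := by linarith
      have hμ0 : 0 ≤ μ := by rw [hμ]; exact div_nonneg (by linarith) hRL.le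
      have hμ1 : μ ≤ 1 := by rw [hμ, div_le_one hRL]; linarith
      have heq : ((w, x) : ℝ × ℝ) = μ • ((w, L) : ℝ × ℝ) + (1 - μ) • ((w, R) : ℝ × ℝ) := by
        apply Prod.ext
        · simp; ring
        · simp [hμ]; field_simp; ring
      rw [heq]
      exact hconv hA hB hμ0 (by linarith) (by ring)

private noncomputable def Tmap : ℝ × ℝ ≃ₜ ℝ × ℝ where
  toFun := fun p => (p.2 - p.1, p.1)
  invFun := fun q => (q.2, q.2 + q.1)
  left_inv := fun p => by simp
  right_inv := fun q => by simp
  continuous_toFun := by fun_prop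
  continuous_invFun := by fun_prop

private noncomputable def Tlin : (ℝ × ℝ) →ₗ[ℝ] (ℝ × ℝ) where
  toFun := fun p => (p.2 - p.1, p.1)
  map_add' := fun p q => by simp [Prod.ext_iff]; ring
  map_smul' := fun r p => by simp [Prod.ext_iff, smul_eq_mul]; ring

private theorem Tmap_measurePreserving :
    MeasurePreserving (fun p : ℝ × ℝ => (p.2 - p.1, p.1)) volume volume := by
  rw [MeasureTheory.Measure.volume_eq_prod]
  exact (measurePreserving_sub_prod volume volume).comp Measure.measurePreserving_swap

private theorem cov (f : Set (ℝ × ℝ)) (n : ℕ) :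
    ∫ p in f, (p.2 - p.1) ^ n = ∫ q in (fun p : ℝ × ℝ => (p.2 - p.1, p.1)) '' f, q.1 ^ n := by
  rw [Tmap_measurePreserving.setIntegral_image_emb
    (Tmap.toMeasurableEquiv.measurableEmbedding) (fun q => q.1 ^ n) f]

private theorem integral_S (s t a b c d : ℝ) (hs : 0 ≤ s) (hst : s < t) (ht : t ≤ 1)
    (ha : 0 ≤ a) (hab : a ≤ b) (hb : b ≤ 1) (hc : 0 ≤ c) (hcd : c ≤ d) (hd : d ≤ 1) (n : ℕ) :
    ∫ p in {p : ℝ × ℝ | s ≤ p.1 ∧ p.1 ≤ t ∧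
        (t - p.1) * a + (p.1 - s) * c ≤ (t - s) * p.2 ∧
        (t - s) * p.2 ≤ (t - p.1) * b + (p.1 - s) * d}, (p.1 : ℝ) ^ n
      = ∫ w in s..t, w ^ n * (((t - w) * (b - a) + (w - s) * (d - c)) / (t - s)) := by
  have hts : (0:ℝ) < t - s := by linarith
  set S : Set (ℝ × ℝ) := {p : ℝ × ℝ | s ≤ p.1 ∧ p.1 ≤ t ∧
        (t - p.1) * a + (p.1 - s) * c ≤ (t - s) * p.2 ∧
        (t - s) * p.2 ≤ (t - p.1) * b + (p.1 - s) * d} with hS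
  have hSm : MeasurableSet S := by
    have : S = {p : ℝ × ℝ | s ≤ p.1} ∩ {p | p.1 ≤ t} ∩
        {p | (t - p.1) * a + (p.1 - s) * c ≤ (t - s) * p.2} ∩
        {p | (t - s) * p.2 ≤ (t - p.1) * b + (p.1 - s) * d} := by
      ext p; simp [hS, mem_setOf_eq]; tauto
    rw [this]
    refine (((measurableSet_le (by fun_prop) (by fun_prop)).inter
      (measurableSet_le (by fun_prop) (by fun_prop))).inter
      (measurableSet_le (by fun_prop) (by fun_prop))).inter
      (measurableSet_le (by fun_prop) (by fun_prop))
  have hsub : S ⊆ Icc s t ×ˢ Icc 0 1 := by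
    rintro ⟨w, x⟩ ⟨h1, h2, h3, h4⟩
    simp only [Prod.fst, Prod.snd] at h1 h2 h3 h4
    refine ⟨⟨h1, h2⟩, ?_, ?_⟩ <;> simp only [Prod.snd] <;> nlinarith
  have hvolS : volume S ≠ ⊤ := by
    refine ne_top_of_le_ne_top ?_ (measure_mono hsub)
    rw [Measure.volume_eq_prod, Measure.prod_prod]
    exact (ENNReal.mul_lt_top measure_Icc_lt_top measure_Icc_lt_top).ne
  have hInt : IntegrableOn (fun p : ℝ × ℝ => p.1 ^ n) S volume := by
    apply Measure.integrableOn_of_bounded (M := 1) hvolS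
      ((continuous_fst.pow n).aestronglyMeasurable)
    filter_upwards [ae_restrict_mem hSm] with p hp
    have h0w : 0 ≤ p.1 := le_trans hs hp.1
    have h1w : p.1 ≤ 1 := le_trans hp.2.1 ht
    rw [Real.norm_eq_abs]
    change |p.1 ^ n| ≤ 1
    rw [abs_of_nonneg (pow_nonneg h0w n)]
    exact pow_le_one₀ h0w h1w
  rw [← integral_indicator hSm, Measure.volume_eq_prod,
    integral_prod _ ((integrable_indicator_iff hSm).2 (by rwa [← Measure.volume_eq_prod]))]
  have hinner : (fun w : ℝ => ∫ x : ℝ, S.indicator (fun p : ℝ × ℝ => p.1 ^ n) (w, x))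
      = (Icc s t).indicator
        (fun w => w ^ n * (((t - w) * (b - a) + (w - s) * (d - c)) / (t - s))) := by
    funext w
    by_cases hw : w ∈ Icc s t
    · have hx : ∀ x : ℝ, S.indicator (fun p : ℝ × ℝ => p.1 ^ n) (w, x)
          = (Icc (((t - w) * a + (w - s) * c) / (t - s))
              (((t - w) * b + (w - s) * d) / (t - s))).indicator (fun _ => w ^ n) x := by
        intro x
        have hiff : ((w, x) ∈ S) ↔ x ∈ Icc (((t - w) * a + (w - s) * c) / (t - s))
            (((t - w) * b + (w - s) * d) / (t - s)) := by
          simp only [hS, mem_setOf_eq, mem_Icc]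
          constructor
          · rintro ⟨-, -, h3, h4⟩
            exact ⟨(div_le_iff₀ hts).2 (by linarith), (le_div_iff₀ hts).2 (by linarith)⟩
          · rintro ⟨h3, h4⟩
            rw [div_le_iff₀ hts] at h3
            rw [le_div_iff₀ hts] at h4
            exact ⟨hw.1, hw.2, by linarith, by linarith⟩
        simp only [Set.indicator_apply, hiff]
      simp_rw [hx]
      rw [integral_indicator measurableSet_Icc, setIntegral_const, measureReal_def, Real.volume_Icc,
        indicator_of_mem hw, smul_eq_mul]
      have hRL : ((t - w) * b + (w - s) * d) / (t - s) - ((t - w) * a + (w - s) * c) / (t - s)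
          = ((t - w) * (b - a) + (w - s) * (d - c)) / (t - s) := by
        rw [div_sub_div_same]; ring_nf
      have hnn : (0:ℝ) ≤ ((t - w) * (b - a) + (w - s) * (d - c)) / (t - s) := by
        apply div_nonneg _ hts.le
        obtain ⟨hw1, hw2⟩ := hw
        nlinarith
      rw [hRL, ENNReal.toReal_ofReal hnn, mul_comm]
    · have hx0 : ∀ x : ℝ, S.indicator (fun p : ℝ × ℝ => p.1 ^ n) (w, x) = 0 := by
        intro x
        apply indicator_of_notMem
        simp only [hS, mem_setOf_eq]
        simp only [mem_Icc, not_and_or, not_le] at hw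
        rintro ⟨hh1, hh2, -⟩
        rcases hw with hw | hw <;> linarith
      simp only [hx0, integral_zero, indicator_of_notMem hw]
  rw [hinner, integral_indicator measurableSet_Icc, integral_Icc_eq_integral_Ioc,
    ← intervalIntegral.integral_of_le hst.le]

private theorem poly_integral (s t u v : ℝ) (hst : s < t) (n : ℕ) :
    ∫ w in s..t, w ^ n * (((t - w) * u + (w - s) * v) / (t - s))
      = (t * u - s * v) / (t - s) * ((t ^ (n + 1) - s ^ (n + 1)) / (n + 1))
        + (v - u) / (t - s) * ((t ^ (n + 2) - s ^ (n + 2)) / (n + 2)) := by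
  have hts : t - s ≠ 0 := by intro h; linarith [sub_eq_zero.1 h]
  have hfun : (fun w : ℝ => w ^ n * (((t - w) * u + (w - s) * v) / (t - s)))
      = fun w => (t * u - s * v) / (t - s) * w ^ n + (v - u) / (t - s) * w ^ (n + 1) := by
    funext w
    field_simp
    ring
  rw [hfun, intervalIntegral.integral_add (f := fun w => (t * u - s * v) / (t - s) * w ^ n)
      (g := fun w => (v - u) / (t - s) * w ^ (n + 1))
      ((continuous_const.mul (continuous_pow n)).intervalIntegrable s t)
      ((continuous_const.mul (continuous_pow (n + 1))).intervalIntegrable s t),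
    intervalIntegral.integral_const_mul, intervalIntegral.integral_const_mul,
    integral_pow, integral_pow]
  simp only [show n + 1 + 1 = n + 2 from rfl]
  push_cast
  ring

private theorem alg (s t u v : ℝ) (n : ℕ) (hts : t - s ≠ 0) :
    (t * u - s * v) / (t - s) * ((t ^ (n + 1) - s ^ (n + 1)) / ((n : ℝ) + 1))
      + (v - u) / (t - s) * ((t ^ (n + 2) - s ^ (n + 2)) / ((n : ℝ) + 2))
    = (1 / (t - s)) *
      ((1 / ((n + 2 : ℕ) : ℝ)) * (v - u) * (t ^ (n + 2) - s ^ (n + 2)) +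
        (t * u - s * v) / (((n + 2 : ℕ) : ℝ) - 1) * (t ^ (n + 1) - s ^ (n + 1))) := by
  have hn1 : ((n : ℝ) + 1) ≠ 0 := by positivity
  have hn2 : ((n : ℝ) + 2) ≠ 0 := by positivity
  push_cast
  have e : (n : ℝ) + 2 - 1 = (n : ℝ) + 1 := by ring
  rw [e]
  field_simp
  ring

/-- The measure of the trapezoid `Q = conv{P₁,P₂,P₄,P₃}` with `P₁ = (ξ₁, ξ₁+s)`,
`P₂ = (ξ₂, ξ₂+s)`, `P₃ = (ξ₃, ξ₃+t)`, `P₄ = (ξ₄, ξ₄+t)`, `u = ξ₂-ξ₁`, `v = ξ₄-ξ₃`: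
`(1/(k-2)!) ∬_Q (y-x)^{k-2} dx dy
  = (1/(k-2)!) (1/(t-s)) ((1/k)(v-u)(t^k - s^k) + ((tu-sv)/(k-1))(t^{k-1} - s^{k-1}))`. -/
theorem integral_trapezoid (k : ℕ) (hk : 2 ≤ k) (s t ξ₁ ξ₂ ξ₃ ξ₄ : ℝ)
    (hs : 0 ≤ s) (hst : s < t) (ht : t ≤ 1)
    (h1 : 0 ≤ ξ₁) (h12 : ξ₁ ≤ ξ₂) (h2 : ξ₂ ≤ 1 - s)
    (h3 : 0 ≤ ξ₃) (h34 : ξ₃ ≤ ξ₄) (h4 : ξ₄ ≤ 1 - t) :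
    (1 / (Nat.factorial (k - 2) : ℝ)) *
      ∫ p in convexHull ℝ ({(ξ₁, ξ₁ + s), (ξ₂, ξ₂ + s), (ξ₃, ξ₃ + t), (ξ₄, ξ₄ + t)} :
        Set (ℝ × ℝ)), (p.2 - p.1) ^ (k - 2) =
    (1 / (Nat.factorial (k - 2) : ℝ)) * (1 / (t - s)) *
      ((1 / (k : ℝ)) * ((ξ₄ - ξ₃) - (ξ₂ - ξ₁)) * (t ^ k - s ^ k) +
        (t * (ξ₂ - ξ₁) - s * (ξ₄ - ξ₃)) / ((k : ℝ) - 1) * (t ^ (k - 1) - s ^ (k - 1))) := by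
  obtain ⟨n, rfl⟩ : ∃ n, k = n + 2 := ⟨k - 2, by omega⟩
  have hc2 : n + 2 - 2 = n := rfl
  have hc1 : n + 2 - 1 = n + 1 := rfl
  rw [hc2, hc1]
  have himg : (fun p : ℝ × ℝ => (p.2 - p.1, p.1)) ''
      (convexHull ℝ ({(ξ₁, ξ₁ + s), (ξ₂, ξ₂ + s), (ξ₃, ξ₃ + t), (ξ₄, ξ₄ + t)} : Set (ℝ × ℝ)))
      = convexHull ℝ ({(s, ξ₁), (s, ξ₂), (t, ξ₃), (t, ξ₄)} : Set (ℝ × ℝ)) := by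
    have hT : (fun p : ℝ × ℝ => (p.2 - p.1, p.1)) = ⇑Tlin := rfl
    rw [hT, Tlin.image_convexHull]
    congr 1
    simp only [Set.image_insert_eq, Set.image_singleton]
    have e1 : Tlin (ξ₁, ξ₁ + s) = (s, ξ₁) := by simp [Tlin]
    have e2 : Tlin (ξ₂, ξ₂ + s) = (s, ξ₂) := by simp [Tlin]
    have e3 : Tlin (ξ₃, ξ₃ + t) = (t, ξ₃) := by simp [Tlin]
    have e4 : Tlin (ξ₄, ξ₄ + t) = (t, ξ₄) := by simp [Tlin]
    rw [e1, e2, e3, e4]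
  rw [cov _ n]
  rw [himg]
  rw [hull_eq_trap s t ξ₁ ξ₂ ξ₃ ξ₄ hst h12 h34]
  rw [integral_S s t ξ₁ ξ₂ ξ₃ ξ₄ hs hst ht h1 h12 (by linarith) h3 h34 (by linarith) n]
  rw [poly_integral s t (ξ₂ - ξ₁) (ξ₄ - ξ₃) hst n]
  have hts : t - s ≠ 0 := by intro h; linarith [sub_eq_zero.1 h]
  rw [alg s t (ξ₂ - ξ₁) (ξ₄ - ξ₃) n hts]
  ring
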